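/- Let r > 1, c₁ ≥ 1, c₂ > 0, C₀ > 0, and let A : ℕ → ℝ be a nonnegative sequence satisfying A(k+1) ≤ c₁ r^{c₂ k} A(k)^r + c₁ r^{c₂ k} + C₀^{r^{k+1}} for all k ≥ 2. Then there is a constant C (depending only on r, c₁, c₂, C₀ and A(2)) such that A(k)^{1/r^k} ≤ C for all k ≥ 2. -/

import Mathlib

open Real

/-- Reverse Hölder / Moser iteration lemma: if a nonnegative sequence `A` satisfies
`A (k+1) ≤ c₁ r^(c₂ k) A(k)^r + c₁ r^(c₂ k) + C₀^(r^(k+1))` for all `k ≥ 2` (with `r > 1`,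
`c₁ ≥ 1`, `c₂ > 0`, `C₀ > 0`), then `A(k)^(1/r^k)` is uniformly bounded for `k ≥ 2`. -/
theorem moser_iteration_bound (r c₁ c₂ C₀ : ℝ) (hr : 1 < r) (hc₁ : 1 ≤ c₁)
    (hc₂ : 0 < c₂) (hC₀ : 0 < C₀) (A : ℕ → ℝ) (hA : ∀ k, 0 ≤ A k)
    (hrec : ∀ k, 2 ≤ k →
      A (k + 1) ≤ c₁ * r ^ (c₂ * k) * A k ^ r + c₁ * r ^ (c₂ * k) + C₀ ^ (r ^ (k + 1))) :
    ∃ C : ℝ, ∀ k, 2 ≤ k → A k ^ (1 / r ^ k) ≤ C := by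
  have hr0 : (0:ℝ) < r := lt_trans one_pos hr
  have hrm : (0:ℝ) < r - 1 := by linarith
  have hlogr : 0 < Real.log r := Real.log_pos hr
  set B : ℕ → ℝ := fun k => max (A k) (max (C₀ ^ (r ^ k)) 1) with hBdef
  have hB1 : ∀ k, 1 ≤ B k := fun k => le_max_of_le_right (le_max_right _ _)
  have hBpos : ∀ k, 0 < B k := fun k => lt_of_lt_of_le one_pos (hB1 k)
  have hAB : ∀ k, A k ≤ B k := fun k => le_max_left _ _
  have hCB : ∀ k, C₀ ^ (r ^ k) ≤ B k := fun k => le_max_of_le_right (le_max_left _ _)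
  have key : ∀ k, 2 ≤ k → B (k+1) ≤ 3 * c₁ * r ^ (c₂ * k) * B k ^ r := by
    intro k hk
    have hrpow1 : (1:ℝ) ≤ r ^ (c₂ * k) := Real.one_le_rpow hr.le (by positivity)
    have hBk1 : (1:ℝ) ≤ B k ^ r := Real.one_le_rpow (hB1 k) hr0.le
    have hAr : A k ^ r ≤ B k ^ r := Real.rpow_le_rpow (hA k) (hAB k) hr0.le
    have hCr : C₀ ^ (r ^ (k+1)) ≤ B k ^ r := by
      have h1 : C₀ ^ (r ^ (k+1)) = (C₀ ^ (r ^ k)) ^ r := by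
        rw [pow_succ, Real.rpow_mul hC₀.le]
      rw [h1]
      exact Real.rpow_le_rpow (by positivity) (hCB k) hr0.le
    have hc₁R : (1:ℝ) ≤ c₁ * r ^ (c₂ * k) := one_le_mul_of_one_le_of_one_le hc₁ hrpow1
    have e1 : c₁ * r ^ (c₂ * k) * A k ^ r ≤ c₁ * r ^ (c₂ * k) * B k ^ r :=
      mul_le_mul_of_nonneg_left hAr (by positivity)
    have e2 : c₁ * r ^ (c₂ * k) ≤ c₁ * r ^ (c₂ * k) * B k ^ r :=
      le_mul_of_one_le_right (by positivity) hBk1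
    have e3 : C₀ ^ (r ^ (k+1)) ≤ c₁ * r ^ (c₂ * k) * B k ^ r :=
      hCr.trans (le_mul_of_one_le_left (by positivity) hc₁R)
    have hX1 : (1:ℝ) ≤ c₁ * r ^ (c₂ * k) * B k ^ r :=
      one_le_mul_of_one_le_of_one_le hc₁R hBk1
    have h2 : A (k+1) ≤ 3 * c₁ * r ^ (c₂ * k) * B k ^ r := by
      have := hrec k hk
      linarith
    have h3 : C₀ ^ (r ^ (k+1)) ≤ 3 * c₁ * r ^ (c₂ * k) * B k ^ r := by linarith
    have h4 : (1:ℝ) ≤ 3 * c₁ * r ^ (c₂ * k) * B k ^ r := by linarith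
    exact max_le h2 (max_le h3 h4)
  have hlog : ∀ k, 2 ≤ k →
      Real.log (B (k+1)) ≤ Real.log (3 * c₁) + c₂ * k * Real.log r + r * Real.log (B k) := by
    intro k hk
    have h1 := key k hk
    have h2 : Real.log (B (k+1)) ≤ Real.log (3 * c₁ * r ^ (c₂ * k) * B k ^ r) :=
      Real.log_le_log (hBpos (k+1)) h1
    rw [Real.log_mul (by positivity) (by positivity),
      Real.log_mul (by positivity) (by positivity),
      Real.log_rpow hr0, Real.log_rpow (hBpos k)] at h2
    linarith
  set a : ℝ := c₂ * Real.log r / (r - 1) with hadef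
  set b : ℝ := (Real.log (3 * c₁) + a) / (r - 1) with hbdef
  set D : ℝ := (Real.log (B 2) + a * 2 + b) / r ^ 2 with hDdef
  have ha_pos : 0 < a := by positivity
  have hlog3 : 0 < Real.log (3 * c₁) := Real.log_pos (by linarith)
  have hb_pos : 0 < b := by positivity
  have ha : a * (r - 1) = c₂ * Real.log r := by rw [hadef]; field_simp [hrm.ne']
  have hb : b * (r - 1) = Real.log (3 * c₁) + a := by rw [hbdef]; field_simp [hrm.ne']
  have hind : ∀ k, 2 ≤ k → Real.log (B k) ≤ D * r ^ k - a * k - b := by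
    intro k hk
    induction k, hk using Nat.le_induction with
    | base =>
      have : D * r ^ 2 = Real.log (B 2) + a * 2 + b := by
        rw [hDdef]; field_simp [hr0.ne']
      push_cast
      linarith
    | succ k hk ih =>
      have h := hlog k hk
      have hih : r * Real.log (B k) ≤ r * (D * r ^ k - a * k - b) :=
        mul_le_mul_of_nonneg_left ih hr0.le
      have hD : D * r ^ (k+1) = r * (D * r ^ k) := by rw [pow_succ]; ring
      have hak : a * (r - 1) * k = c₂ * Real.log r * k := by rw [ha]
      push_cast
      nlinarith [h, hih, hak, hb, hD]
  refine ⟨Real.exp D, fun k hk => ?_⟩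
  have hrk : (0:ℝ) < r ^ k := pow_pos hr0 k
  calc A k ^ (1 / r ^ k) ≤ B k ^ (1 / r ^ k) :=
        Real.rpow_le_rpow (hA k) (hAB k) (by positivity)
    _ = Real.exp (Real.log (B k) * (1 / r ^ k)) := Real.rpow_def_of_pos (hBpos k) _
    _ ≤ Real.exp D := by
        apply Real.exp_le_exp.mpr
        have h := hind k hk
        have hk0 : (0:ℝ) ≤ a * k + b := by positivity
        have h2 : Real.log (B k) ≤ D * r ^ k := by linarith
        calc Real.log (B k) * (1 / r ^ k) ≤ (D * r ^ k) * (1 / r ^ k) := by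
              apply mul_le_mul_of_nonneg_right h2 (by positivity)
          _ = D := by field_simp
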